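/- Let A ⊆ {0,1}^n be a monotone set with at least 2 elements and let δ(A) be its approximate FKG ratio. Then there exists a non-constant function f : A → ℝ such that (1 + δ(A))·n·Var_A[f] ≥ 𝔈_A(f). -/

import Mathlib

open Finset

/-- Flip the `i`-th bit of `x`. -/
def bflip {n : ℕ} (x : Fin n → Bool) (i : Fin n) : Fin n → Bool := Function.update x i (!x i)

/-- Set the `i`-th bit of `x` to `b`. -/
def bset {n : ℕ} (x : Fin n → Bool) (i : Fin n) (b : Bool) : Fin n → Bool := Function.update x i b

/-- Density of `A` under the uniform measure on the hypercube. -/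
noncomputable def mu {n : ℕ} (A : Finset (Fin n → Bool)) : ℝ := (A.card : ℝ) / 2 ^ n

/-- Expectation of `f` under the uniform measure on `A`. -/
noncomputable def expA {n : ℕ} (A : Finset (Fin n → Bool)) (f : (Fin n → Bool) → ℝ) : ℝ :=
  (∑ x ∈ A, f x) / (A.card : ℝ)

/-- Variance of `f` under the uniform measure on `A`. -/
noncomputable def varA {n : ℕ} (A : Finset (Fin n → Bool)) (f : (Fin n → Bool) → ℝ) : ℝ :=
  expA A (fun x => (f x - expA A f) ^ 2)

/-- Covariance of `f` and `g` under the uniform measure on `A`. -/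
noncomputable def covA {n : ℕ} (A : Finset (Fin n → Bool)) (f g : (Fin n → Bool) → ℝ) : ℝ :=
  expA A (fun x => (f x - expA A f) * (g x - expA A g))

/-- Dirichlet form of `f` on the subgraph of the hypercube induced by `A`. -/
noncomputable def dirA {n : ℕ} (A : Finset (Fin n → Bool)) (f : (Fin n → Bool) → ℝ) : ℝ :=
  (1 / 4) * expA A (fun x => ∑ i, (f x - f (bflip x i)) ^ 2 * (if bflip x i ∈ A then (1 : ℝ) else 0))

/-- Expectation of `f` under the uniform measure on the whole hypercube. -/
noncomputable def expC {n : ℕ} (f : (Fin n → Bool) → ℝ) : ℝ := (∑ x, f x) / 2 ^ n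

/-- The upward boundary (directed Dirichlet energy) `𝔈⁻(f)`. -/
noncomputable def energyMinus {n : ℕ} (f : (Fin n → Bool) → ℝ) : ℝ :=
  (1 / 4) * expC (fun x => ∑ i, (min 0 (f (bset x i true) - f (bset x i false))) ^ 2)

/-- The `L²`-distance of `f` to monotone functions on the hypercube. -/
noncomputable def dist2mono {n : ℕ} (f : (Fin n → Bool) → ℝ) : ℝ :=
  ⨅ g : {g : (Fin n → Bool) → ℝ // Monotone g}, Real.sqrt (expC fun x => (f x - g.1 x) ^ 2)

/-- `f` is monotone increasing on the poset `A`. -/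
def MonoIncrOn {n : ℕ} (A : Finset (Fin n → Bool)) (f : (Fin n → Bool) → ℝ) : Prop :=
  ∀ x ∈ A, ∀ y ∈ A, x ≤ y → f x ≤ f y

/-- `f` is non-constant on `A`. -/
def NonconstOn {n : ℕ} (A : Finset (Fin n → Bool)) (f : (Fin n → Bool) → ℝ) : Prop :=
  ∃ x ∈ A, ∃ y ∈ A, f x ≠ f y

/-- The approximate FKG ratio `δ(A)`. -/
noncomputable def fkgRatio {n : ℕ} (A : Finset (Fin n → Bool)) : ℝ :=
  min 0 (sInf {r : ℝ | ∃ f g : (Fin n → Bool) → ℝ, MonoIncrOn A f ∧ MonoIncrOn A g ∧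
    NonconstOn A f ∧ NonconstOn A g ∧ r = covA A f g / Real.sqrt (varA A f * varA A g)})

/-- The extension operator `T`. -/
noncomputable def extT {n : ℕ} (A : Finset (Fin n → Bool)) (hA : A.Nonempty)
    (f : (Fin n → Bool) → ℝ) : (Fin n → Bool) → ℝ :=
  fun x => if x ∈ A then f x else A.inf' hA f

/-- The coordinate component `ℒ^{(i)}` of the directed Laplacian. -/
noncomputable def lapI {n : ℕ} (f : (Fin n → Bool) → ℝ) (i : Fin n) (x : Fin n → Bool) : ℝ :=
  (1 / 2) * (f (bflip x i) - f x) * (if f (bset x i true) < f (bset x i false) then (1 : ℝ) else 0)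

/-- The directed Laplacian `ℒ⁻`. -/
noncomputable def lapMinus {n : ℕ} (f : (Fin n → Bool) → ℝ) (x : Fin n → Bool) : ℝ :=
  ∑ i, lapI f i x

namespace Stmt4Aux

variable {n : ℕ}

/-- Raw inner product over `A`. -/
noncomputable def CC (A : Finset (Fin n → Bool)) (u v : (Fin n → Bool) → ℝ) : ℝ :=
  ∑ x ∈ A, u x * v x

/-- Raw bilinear Dirichlet form over `A`. -/
noncomputable def DD (A : Finset (Fin n → Bool)) (u v : (Fin n → Bool) → ℝ) : ℝ :=
  ∑ x ∈ A, ∑ i, (u x - u (bflip x i)) * (v x - v (bflip x i)) *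
    (if bflip x i ∈ A then (1:ℝ) else 0)

lemma bflip_bflip (x : Fin n → Bool) (i : Fin n) : bflip (bflip x i) i = x := by
  funext j
  by_cases h : j = i
  · subst h; simp [bflip]
  · simp [bflip, Function.update_of_ne h]

lemma bflip_bijective (i : Fin n) : Function.Bijective (fun x : Fin n → Bool => bflip x i) :=
  Function.Involutive.bijective (fun x => bflip_bflip x i)

lemma CC_nonneg (A : Finset (Fin n → Bool)) (u : (Fin n → Bool) → ℝ) : 0 ≤ CC A u u :=
  Finset.sum_nonneg fun x _ => mul_self_nonneg _

lemma DD_nonneg (A : Finset (Fin n → Bool)) (u : (Fin n → Bool) → ℝ) : 0 ≤ DD A u u := by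
  refine Finset.sum_nonneg fun x _ => Finset.sum_nonneg fun i _ => ?_
  by_cases h : bflip x i ∈ A
  · simp only [h, if_true, mul_one]; exact mul_self_nonneg _
  · simp [h]

lemma sum_flip_inner (A : Finset (Fin n → Bool)) (F : (Fin n → Bool) → ℝ) (i : Fin n) :
    ∑ x ∈ A, F (bflip x i) * (if bflip x i ∈ A then (1:ℝ) else 0)
      = ∑ x ∈ A, F x * (if bflip x i ∈ A then (1:ℝ) else 0) := by
  have e1 : ∀ (G : (Fin n → Bool) → ℝ), ∑ x ∈ A, G x = ∑ x, (if x ∈ A then G x else 0) := by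
    intro G
    rw [Finset.sum_ite_mem, Finset.univ_inter]
  rw [e1 (fun x => F (bflip x i) * (if bflip x i ∈ A then (1:ℝ) else 0)),
    e1 (fun x => F x * (if bflip x i ∈ A then (1:ℝ) else 0))]
  refine Fintype.sum_bijective (fun x => bflip x i) (bflip_bijective i) _ _ fun x => ?_
  simp only [bflip_bflip]
  by_cases hx : x ∈ A <;> by_cases hb : bflip x i ∈ A <;> simp [hx, hb]

lemma sum_flip (A : Finset (Fin n → Bool)) (F : (Fin n → Bool) → ℝ) :
    ∑ x ∈ A, ∑ i, F (bflip x i) * (if bflip x i ∈ A then (1:ℝ) else 0)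
      = ∑ x ∈ A, ∑ i, F x * (if bflip x i ∈ A then (1:ℝ) else 0) := by
  rw [Finset.sum_comm]
  conv_rhs => rw [Finset.sum_comm]
  exact Finset.sum_congr rfl fun i _ => sum_flip_inner A F i

/-- The energy bound `DD u u ≤ 4 n CC u u`. -/
lemma DD_le (A : Finset (Fin n → Bool)) (u : (Fin n → Bool) → ℝ) :
    DD A u u ≤ 4 * n * CC A u u := by
  have step1 : DD A u u ≤
      ∑ x ∈ A, ∑ i, ((2 * (u x * u x)) * (if bflip x i ∈ A then (1:ℝ) else 0)
        + (2 * (u (bflip x i) * u (bflip x i))) * (if bflip x i ∈ A then (1:ℝ) else 0)) := by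
    refine Finset.sum_le_sum fun x _ => Finset.sum_le_sum fun i _ => ?_
    by_cases h : bflip x i ∈ A
    · simp only [h, if_true, mul_one]; nlinarith [sq_nonneg (u x + u (bflip x i))]
    · simp [h]
  have step2 : ∑ x ∈ A, ∑ i, (2 * (u (bflip x i) * u (bflip x i))) * (if bflip x i ∈ A then (1:ℝ) else 0)
      = ∑ x ∈ A, ∑ i, (2 * (u x * u x)) * (if bflip x i ∈ A then (1:ℝ) else 0) :=
    sum_flip A (fun y => 2 * (u y * u y))
  have step3 : ∑ x ∈ A, ∑ i, (2 * (u x * u x)) * (if bflip x i ∈ A then (1:ℝ) else 0)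
      ≤ ∑ x ∈ A, ∑ i : Fin n, 2 * (u x * u x) := by
    refine Finset.sum_le_sum fun x _ => Finset.sum_le_sum fun i _ => ?_
    by_cases h : bflip x i ∈ A
    · simp [h]
    · simp only [h, if_false, mul_zero]
      nlinarith [mul_self_nonneg (u x)]
  have step4 : ∑ x ∈ A, ∑ i : Fin n, 2 * (u x * u x) = 2 * n * CC A u u := by
    simp only [Finset.sum_const, Finset.card_univ, Fintype.card_fin, nsmul_eq_mul, CC]
    rw [Finset.mul_sum]
    exact Finset.sum_congr rfl fun x _ => by ring
  calc DD A u u ≤ _ := step1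
    _ = ∑ x ∈ A, ∑ i, (2 * (u x * u x)) * (if bflip x i ∈ A then (1:ℝ) else 0)
        + ∑ x ∈ A, ∑ i, (2 * (u (bflip x i) * u (bflip x i))) * (if bflip x i ∈ A then (1:ℝ) else 0) := by
        rw [← Finset.sum_add_distrib]
        exact Finset.sum_congr rfl fun x _ => by rw [← Finset.sum_add_distrib]
    _ ≤ 2 * n * CC A u u + 2 * n * CC A u u := by
        rw [step2]
        have := le_trans step3 (le_of_eq step4)
        linarith
    _ = 4 * n * CC A u u := by ring

lemma CC_expand (A : Finset (Fin n → Bool)) (u v : (Fin n → Bool) → ℝ) (t : ℝ) :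
    CC A (fun x => u x + t * v x) (fun x => u x + t * v x)
      = CC A u u + (2 * CC A u v) * t + CC A v v * t ^ 2 := by
  simp only [CC, Finset.mul_sum, Finset.sum_mul, ← Finset.sum_add_distrib]
  exact Finset.sum_congr rfl fun x _ => by ring

lemma DD_expand (A : Finset (Fin n → Bool)) (u v : (Fin n → Bool) → ℝ) (t : ℝ) :
    DD A (fun x => u x + t * v x) (fun x => u x + t * v x)
      = DD A u u + (2 * DD A u v) * t + DD A v v * t ^ 2 := by
  simp only [DD, Finset.mul_sum, Finset.sum_mul, ← Finset.sum_add_distrib]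
  exact Finset.sum_congr rfl fun x _ => Finset.sum_congr rfl fun i _ => by ring

/-- Cauchy–Schwarz for the PSD form `B(u,v) = 4n·CC u v − DD u v`. -/
lemma B_cauchy (A : Finset (Fin n → Bool)) (u v : (Fin n → Bool) → ℝ) :
    (4 * n * CC A u v - DD A u v) ^ 2
      ≤ (4 * n * CC A u u - DD A u u) * (4 * n * CC A v v - DD A v v) := by
  have hq : ∀ t : ℝ, 0 ≤ (4 * n * CC A v v - DD A v v) * (t * t)
      + (2 * (4 * n * CC A u v - DD A u v)) * t + (4 * n * CC A u u - DD A u u) := by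
    intro t
    have h := DD_le A (fun x => u x + t * v x)
    rw [DD_expand, CC_expand] at h
    nlinarith [h]
  have hd := discrim_le_zero hq
  rw [discrim] at hd
  nlinarith [hd]

lemma flip_le_of_true {x : Fin n → Bool} {i : Fin n} (h : x i = true) : bflip x i ≤ x := by
  intro j
  by_cases hj : j = i
  · subst hj; simp [bflip, h]
  · simp [bflip, Function.update_of_ne hj]

lemma le_flip_of_false {x : Fin n → Bool} {i : Fin n} (h : x i = false) : x ≤ bflip x i := by
  intro j
  by_cases hj : j = i
  · subst hj; simp [bflip, h]
  · simp [bflip, Function.update_of_ne hj]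

lemma DD_mono_nonneg (A : Finset (Fin n → Bool)) {g h : (Fin n → Bool) → ℝ}
    (hg : MonoIncrOn A g) (hh : MonoIncrOn A h) : 0 ≤ DD A g h := by
  refine Finset.sum_nonneg fun x hx => Finset.sum_nonneg fun i _ => ?_
  by_cases hb : bflip x i ∈ A
  · simp only [hb, if_true, mul_one]
    rcases Bool.eq_false_or_eq_true (x i) with hxi | hxi
    · have hle : bflip x i ≤ x := flip_le_of_true hxi
      have h1 := hg (bflip x i) hb x hx hle
      have h2 := hh (bflip x i) hb x hx hle
      nlinarith
    · have hle : x ≤ bflip x i := le_flip_of_false hxi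
      have h1 := hg x hx (bflip x i) hb hle
      have h2 := hh x hx (bflip x i) hb hle
      nlinarith
  · simp [hb]

/-- `DD` only depends on values of its arguments on `A`. -/
lemma DD_congr (A : Finset (Fin n → Bool)) {u u' v v' : (Fin n → Bool) → ℝ}
    (hu : ∀ x ∈ A, u x = u' x) (hv : ∀ x ∈ A, v x = v' x) : DD A u v = DD A u' v' := by
  refine Finset.sum_congr rfl fun x hx => Finset.sum_congr rfl fun i _ => ?_
  by_cases hb : bflip x i ∈ A
  · simp [hb, hu x hx, hu _ hb, hv x hx, hv _ hb]
  · simp [hb]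

/-- `DD` is invariant under subtracting constants. -/
lemma DD_center (A : Finset (Fin n → Bool)) (u v : (Fin n → Bool) → ℝ) (c c' : ℝ) :
    DD A (fun x => u x - c) (fun x => v x - c') = DD A u v :=
  Finset.sum_congr rfl fun x _ => Finset.sum_congr rfl fun i _ => by ring_nf

lemma DD_smul_self (A : Finset (Fin n → Bool)) (u : (Fin n → Bool) → ℝ) (c : ℝ) :
    DD A (fun x => u x * c) (fun x => u x * c) = c ^ 2 * DD A u u := by
  simp only [DD, Finset.mul_sum]
  exact Finset.sum_congr rfl fun x _ => Finset.sum_congr rfl fun i _ => by ring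

/-- The constraint set: centered, supported on `A`, unit norm. -/
def KK (A : Finset (Fin n → Bool)) : Set ((Fin n → Bool) → ℝ) :=
  {u | (∀ x, x ∉ A → u x = 0) ∧ (∑ x ∈ A, u x) = 0 ∧ CC A u u = 1}

lemma KK_isClosed (A : Finset (Fin n → Bool)) : IsClosed (KK A) := by
  have h1 : IsClosed {u : (Fin n → Bool) → ℝ | ∀ x, x ∉ A → u x = 0} := by
    have : {u : (Fin n → Bool) → ℝ | ∀ x, x ∉ A → u x = 0}
        = ⋂ x, ⋂ (_ : x ∉ A), {u : (Fin n → Bool) → ℝ | u x = 0} := by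
      ext u; simp
    rw [this]
    exact isClosed_iInter fun x => isClosed_iInter fun _ =>
      isClosed_eq (continuous_apply x) continuous_const
  have h2 : IsClosed {u : (Fin n → Bool) → ℝ | (∑ x ∈ A, u x) = 0} :=
    isClosed_eq (by exact continuous_finset_sum A fun x _ => continuous_apply x) continuous_const
  have h3 : IsClosed {u : (Fin n → Bool) → ℝ | CC A u u = 1} := by
    refine isClosed_eq ?_ continuous_const
    exact continuous_finset_sum A fun x _ => (continuous_apply x).mul (continuous_apply x)
  have : KK A = {u : (Fin n → Bool) → ℝ | ∀ x, x ∉ A → u x = 0}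
      ∩ ({u | (∑ x ∈ A, u x) = 0} ∩ {u | CC A u u = 1}) := by
    ext u; simp [KK, Set.mem_setOf_eq, and_assoc]
  rw [this]
  exact h1.inter (h2.inter h3)

lemma KK_isCompact (A : Finset (Fin n → Bool)) : IsCompact (KK A) := by
  refine IsCompact.of_isClosed_subset (isCompact_closedBall (0 : (Fin n → Bool) → ℝ) 1)
    (KK_isClosed A) ?_
  intro u hu
  obtain ⟨hsupp, -, hnorm⟩ := hu
  rw [Metric.mem_closedBall, dist_zero_right]
  rw [pi_norm_le_iff_of_nonneg zero_le_one]
  intro x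
  rw [Real.norm_eq_abs]
  by_cases hx : x ∈ A
  · have hle : u x * u x ≤ CC A u u :=
      Finset.single_le_sum (fun y (_ : y ∈ A) => mul_self_nonneg (u y)) hx
    rw [hnorm] at hle
    rw [abs_le]
    constructor <;> nlinarith
  · simp [hsupp x hx]

lemma KK_nonempty (A : Finset (Fin n → Bool)) (hcard : 2 ≤ A.card) : (KK A).Nonempty := by
  obtain ⟨a, ha, b, hb, hab⟩ := Finset.one_lt_card.mp hcard
  set s : ℝ := (Real.sqrt 2)⁻¹ with hs
  have hs2 : s * s = 1 / 2 := by
    have h2' : Real.sqrt 2 * Real.sqrt 2 = 2 := Real.mul_self_sqrt (by norm_num)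
    rw [hs, ← mul_inv, h2']
    norm_num
  refine ⟨fun x => if x = a then s else if x = b then -s else 0, ?_, ?_, ?_⟩
  · intro x hx
    have hxa : x ≠ a := fun h => hx (h ▸ ha)
    have hxb : x ≠ b := fun h => hx (h ▸ hb)
    simp [hxa, hxb]
  · have hsplit : ∀ x : Fin n → Bool, (if x = a then s else if x = b then -s else 0)
        = (if x = a then s else 0) + (if x = b then -s else 0) := by
      intro x
      by_cases h1 : x = a
      · subst h1; simp [hab]
      · simp [h1]
    rw [Finset.sum_congr rfl fun x _ => hsplit x, Finset.sum_add_distrib,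
      Finset.sum_ite_eq' A a (fun _ => s), Finset.sum_ite_eq' A b (fun _ => -s)]
    simp [ha, hb]
  · have hsplit : ∀ x : Fin n → Bool,
        (if x = a then s else if x = b then -s else 0) * (if x = a then s else if x = b then -s else 0)
        = (if x = a then s * s else 0) + (if x = b then s * s else 0) := by
      intro x
      by_cases h1 : x = a
      · subst h1; simp [hab]
      · by_cases h2 : x = b
        · subst h2; simp [Ne.symm hab]
        · simp [h1, h2]
    rw [CC, Finset.sum_congr rfl fun x _ => hsplit x, Finset.sum_add_distrib,
      Finset.sum_ite_eq' A a (fun _ => s * s), Finset.sum_ite_eq' A b (fun _ => s * s)]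
    simp [ha, hb, hs2]
    norm_num

lemma exists_min (A : Finset (Fin n → Bool)) (hcard : 2 ≤ A.card) :
    ∃ f0 ∈ KK A, ∀ u ∈ KK A, DD A f0 f0 ≤ DD A u u := by
  have hcont : ContinuousOn (fun u : (Fin n → Bool) → ℝ => DD A u u) (KK A) := by
    apply Continuous.continuousOn
    apply continuous_finset_sum
    intro x _
    apply continuous_finset_sum
    intro i _
    exact (((continuous_apply x).sub (continuous_apply (bflip x i))).mul
      ((continuous_apply x).sub (continuous_apply (bflip x i)))).mul continuous_const
  obtain ⟨f0, hf0, hmin⟩ := (KK_isCompact A).exists_isMinOn (KK_nonempty A hcard) hcont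
  exact ⟨f0, hf0, fun u hu => hmin hu⟩

/-- The minimum extends to all centered functions. -/
lemma spec_bound (A : Finset (Fin n → Bool)) (hN : (0:ℝ) < (A.card : ℝ))
    {f0 : (Fin n → Bool) → ℝ} (hf0 : f0 ∈ KK A)
    (hmin : ∀ u ∈ KK A, DD A f0 f0 ≤ DD A u u)
    (w : (Fin n → Bool) → ℝ) (hw : (∑ x ∈ A, w x) = 0) :
    DD A f0 f0 * CC A w w ≤ DD A w w := by
  set c := CC A w w with hc
  have hc0 : 0 ≤ c := CC_nonneg A w
  rcases eq_or_lt_of_le hc0 with hceq | hcpos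
  · -- c = 0 : w vanishes on A, both sides are 0
    have hzero : ∀ x ∈ A, w x = 0 := by
      intro x hx
      have := (Finset.sum_eq_zero_iff_of_nonneg
        (fun y (_ : y ∈ A) => mul_self_nonneg (w y))).mp hceq.symm x hx
      exact mul_self_eq_zero.mp this
    have hDD : DD A w w = 0 := by
      refine Finset.sum_eq_zero fun x hx => Finset.sum_eq_zero fun i _ => ?_
      by_cases hb : bflip x i ∈ A
      · simp [hb, hzero x hx, hzero _ hb]
      · simp [hb]
    rw [hDD, ← hceq]
    simp
  · -- c > 0 : normalize
    set s := (Real.sqrt c)⁻¹ with hsdef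
    have hsq : Real.sqrt c * Real.sqrt c = c := Real.mul_self_sqrt hc0
    have hsqpos : 0 < Real.sqrt c := Real.sqrt_pos.mpr hcpos
    have hs2 : s * s = c⁻¹ := by rw [hsdef, ← mul_inv, hsq]
    set w' : (Fin n → Bool) → ℝ := fun x => if x ∈ A then w x * s else 0 with hw'
    have hmem : w' ∈ KK A := by
      refine ⟨fun x hx => by simp [hw', hx], ?_, ?_⟩
      · have : ∑ x ∈ A, w' x = (∑ x ∈ A, w x) * s := by
          rw [Finset.sum_mul]
          exact Finset.sum_congr rfl fun x hx => by simp [hw', hx]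
        rw [this, hw, zero_mul]
      · have : CC A w' w' = (∑ x ∈ A, w x * w x) * (s * s) := by
          rw [CC, Finset.sum_mul]
          exact Finset.sum_congr rfl fun x hx => by simp [hw', hx]; ring
        rw [this, hs2]
        have hceq' : (∑ x ∈ A, w x * w x) = c := rfl
        rw [hceq', mul_comm]
        exact inv_mul_cancel₀ (ne_of_gt hcpos)
    have hDDw' : DD A w' w' = c⁻¹ * DD A w w := by
      have h1 : DD A w' w' = DD A (fun x => w x * s) (fun x => w x * s) :=
        DD_congr A (fun x hx => by simp [hw', hx]) (fun x hx => by simp [hw', hx])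
      rw [h1, DD_smul_self]
      rw [sq, hs2]
    have := hmin w' hmem
    rw [hDDw'] at this
    calc DD A f0 f0 * CC A w w = DD A f0 f0 * c := by rw [hc]
      _ ≤ (c⁻¹ * DD A w w) * c := by
          apply mul_le_mul_of_nonneg_right this (le_of_lt hcpos)
      _ = DD A w w := by field_simp
    
/-- variance in terms of `CC`. -/
lemma varA_eq (A : Finset (Fin n → Bool)) (g : (Fin n → Bool) → ℝ) :
    varA A g = CC A (fun x => g x - expA A g) (fun x => g x - expA A g) / (A.card : ℝ) := by
  rw [varA, expA, CC]
  congr 1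
  exact Finset.sum_congr rfl fun x _ => sq (g x - expA A g) ▸ by ring

/-- covariance in terms of `CC`. -/
lemma covA_eq (A : Finset (Fin n → Bool)) (g h : (Fin n → Bool) → ℝ) :
    covA A g h = CC A (fun x => g x - expA A g) (fun x => h x - expA A h) / (A.card : ℝ) := rfl

/-- Dirichlet form in terms of `DD`. -/
lemma dirA_eq (A : Finset (Fin n → Bool)) (f : (Fin n → Bool) → ℝ) :
    dirA A f = DD A f f / (4 * (A.card : ℝ)) := by
  rw [dirA, expA, DD]
  have : ∀ x : Fin n → Bool,
      (∑ i, (f x - f (bflip x i)) ^ 2 * (if bflip x i ∈ A then (1:ℝ) else 0))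
      = ∑ i, (f x - f (bflip x i)) * (f x - f (bflip x i)) * (if bflip x i ∈ A then (1:ℝ) else 0) := by
    intro x
    exact Finset.sum_congr rfl fun i _ => by ring
  rw [Finset.sum_congr rfl fun x _ => this x]
  ring

lemma sum_center (A : Finset (Fin n → Bool)) (hN : (0:ℝ) < (A.card : ℝ))
    (g : (Fin n → Bool) → ℝ) : (∑ x ∈ A, (g x - expA A g)) = 0 := by
  rw [Finset.sum_sub_distrib, Finset.sum_const, nsmul_eq_mul, expA]
  field_simp
  ring

lemma varA_pos (A : Finset (Fin n → Bool)) (hN : (0:ℝ) < (A.card : ℝ))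
    {g : (Fin n → Bool) → ℝ} (hg : NonconstOn A g) : 0 < varA A g := by
  obtain ⟨x0, hx0, y0, hy0, hxy⟩ := hg
  rw [varA, expA]
  apply div_pos _ hN
  have hnn : ∀ x ∈ A, (0:ℝ) ≤ (g x - expA A g) ^ 2 := fun x _ => sq_nonneg _
  rcases eq_or_lt_of_le (Finset.sum_nonneg hnn) with heq | hlt
  · exfalso
    have hall : ∀ x ∈ A, (g x - expA A g) ^ 2 = 0 :=
      (Finset.sum_eq_zero_iff_of_nonneg hnn).mp heq.symm
    have h1 : g x0 = expA A g := by
      have := hall x0 hx0; nlinarith [this]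
    have h2 : g y0 = expA A g := by
      have := hall y0 hy0; nlinarith [this]
    exact hxy (h1.trans h2.symm)
  · exact hlt

/-- The central covariance bound: the correlation of any two monotone functions of positive
variance is at least `Λ/(4n) - 1` where `Λ` is the minimal energy. -/
lemma cov_bound (A : Finset (Fin n → Bool)) (hN : (0:ℝ) < (A.card : ℝ)) (hn : (0:ℝ) < (n:ℝ))
    {f0 : (Fin n → Bool) → ℝ} (hf0 : f0 ∈ KK A)
    (hmin : ∀ u ∈ KK A, DD A f0 f0 ≤ DD A u u)
    {g h : (Fin n → Bool) → ℝ} (hg : MonoIncrOn A g) (hh : MonoIncrOn A h)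
    (hgv : 0 < varA A g) (hhv : 0 < varA A h) :
    DD A f0 f0 / (4 * n) - 1 ≤ covA A g h / Real.sqrt (varA A g * varA A h) := by
  set N := (A.card : ℝ)
  set Λ := DD A f0 f0 with hΛ
  have hΛ0 : 0 ≤ Λ := DD_nonneg A f0
  have hΛ4n : Λ ≤ 4 * n := by
    have h1 := DD_le A f0
    have h2 : CC A f0 f0 = 1 := hf0.2.2
    rw [h2, mul_one] at h1
    exact h1
  set gc : (Fin n → Bool) → ℝ := fun x => g x - expA A g with hgc
  set hc : (Fin n → Bool) → ℝ := fun x => h x - expA A h with hhc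
  set a := CC A gc gc with hadef
  set b := CC A hc hc with hbdef
  set p := CC A gc hc with hpdef
  have hasum : (∑ x ∈ A, gc x) = 0 := sum_center A hN g
  have hbsum : (∑ x ∈ A, hc x) = 0 := sum_center A hN h
  have ha : varA A g = a / N := varA_eq A g
  have hb : varA A h = b / N := varA_eq A h
  have hp : covA A g h = p / N := covA_eq A g h
  have hapos : 0 < a := by
    have h' : a = varA A g * N := by rw [ha]; field_simp
    rw [h']; exact mul_pos hgv hN
  have hbpos : 0 < b := by
    have h' : b = varA A h * N := by rw [hb]; field_simp
    rw [h']; exact mul_pos hhv hN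
  -- positivity of the cross Dirichlet form
  have hd0 : 0 ≤ DD A gc hc := by
    have : DD A gc hc = DD A g h := DD_center A g h (expA A g) (expA A h)
    rw [this]
    exact DD_mono_nonneg A hg hh
  -- Cauchy–Schwarz with the spectral bounds
  have hcs := B_cauchy A gc hc
  have hspecg : Λ * a ≤ DD A gc gc := spec_bound A hN hf0 hmin gc hasum
  have hspech : Λ * b ≤ DD A hc hc := spec_bound A hN hf0 hmin hc hbsum
  have hleg : DD A gc gc ≤ 4 * n * a := DD_le A gc
  have hleh : DD A hc hc ≤ 4 * n * b := DD_le A hc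
  set R := Real.sqrt (a * b) with hRdef
  have hRpos : 0 < R := Real.sqrt_pos.mpr (mul_pos hapos hbpos)
  have hR2 : R * R = a * b := Real.mul_self_sqrt (le_of_lt (mul_pos hapos hbpos))
  -- (4np - d)² ≤ ((4n-Λ)R)²
  have e1 : (4 * n - Λ) * a = 4 * n * a - Λ * a := by ring
  have e2 : (4 * n - Λ) * b = 4 * n * b - Λ * b := by ring
  have hg1 : 4 * n * a - DD A gc gc ≤ (4 * n - Λ) * a := by rw [e1]; linarith
  have hg2 : 4 * n * b - DD A hc hc ≤ (4 * n - Λ) * b := by rw [e2]; linarith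
  have hg2' : 0 ≤ 4 * n * b - DD A hc hc := by linarith
  have hg1' : 0 ≤ (4 * n - Λ) * a := mul_nonneg (by linarith) hapos.le
  have hsq : (4 * n * p - DD A gc hc) ^ 2 ≤ ((4 * n - Λ) * R) ^ 2 := by
    calc (4 * n * p - DD A gc hc) ^ 2
        ≤ (4 * n * a - DD A gc gc) * (4 * n * b - DD A hc hc) := hcs
      _ ≤ ((4 * n - Λ) * a) * ((4 * n - Λ) * b) := mul_le_mul hg1 hg2 hg2' hg1'
      _ = ((4 * n - Λ) * R) ^ 2 := by
          have e3 : ((4 * n - Λ) * R) ^ 2 = (4 * n - Λ) ^ 2 * (R * R) := by ring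
          rw [e3, hR2]; ring
  have habs : -((4 * n - Λ) * R) ≤ 4 * n * p - DD A gc hc := by
    nlinarith [hsq, mul_nonneg (sub_nonneg.mpr hΛ4n) hRpos.le,
      sq_nonneg (4 * n * p - DD A gc hc + (4 * n - Λ) * R)]
  have hkey : (Λ - 4 * n) * R ≤ 4 * n * p := by
    have e4 : (Λ - 4 * n) * R = -((4 * n - Λ) * R) := by ring
    rw [e4]; linarith
  -- denominator computation
  have hden : Real.sqrt (varA A g * varA A h) = R / N := by
    have hRN : (R / N) ^ 2 = (R * R) / (N * N) := by ring
    have : varA A g * varA A h = (R / N) ^ 2 := by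
      rw [ha, hb, hRN, hR2]; ring
    rw [this, Real.sqrt_sq (by positivity)]
  rw [hp, hden]
  have hquot : (p / N) / (R / N) = p / R := by
    rw [div_div_div_eq]
    rw [mul_comm N R, ← div_div_div_eq]
    rw [div_self (ne_of_gt hN), div_one]
  rw [hquot]
  have h4n : (0:ℝ) < 4 * n := by linarith
  rw [div_sub' (ne_of_gt h4n), div_le_div_iff₀ h4n hRpos]
  have e5 : (Λ - 4 * (n:ℝ) * 1) * R = (Λ - 4 * (n:ℝ)) * R := by ring
  rw [e5]
  linarith [hkey]

end Stmt4Aux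

open Stmt4Aux in
/-- for a monotone set `A` with at least two elements, there is a
non-constant `f : A → ℝ` with `(1 + δ(A))·n·Var_A[f] ≥ 𝔈_A(f)`. -/
theorem stmt_4 (n : ℕ) (A : Finset (Fin n → Bool)) (hcard : 2 ≤ A.card)
    (hmono : ∀ x ∈ A, ∀ y : Fin n → Bool, x ≤ y → y ∈ A) :
    ∃ f : (Fin n → Bool) → ℝ, NonconstOn A f ∧
      (1 + fkgRatio A) * n * varA A f ≥ dirA A f := by
  have hN : (0:ℝ) < (A.card : ℝ) := by
    have : 0 < A.card := lt_of_lt_of_le (by norm_num) hcard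
    exact_mod_cast this
  have hNne : (A.card : ℝ) ≠ 0 := ne_of_gt hN
  -- n is positive
  have hnpos : 0 < n := by
    by_contra hn0
    push_neg at hn0
    interval_cases n
    have h1 : A.card ≤ Fintype.card (Fin 0 → Bool) := Finset.card_le_univ A
    simp [Fintype.card_fun] at h1
    omega
  have hn : (0:ℝ) < (n:ℝ) := by exact_mod_cast hnpos
  obtain ⟨f0, hf0, hmin⟩ := exists_min A hcard
  obtain ⟨hf0supp, hf0sum, hf0cc⟩ := hf0
  set Λ := DD A f0 f0 with hΛ
  have hΛ0 : 0 ≤ Λ := DD_nonneg A f0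
  have hΛ4n : Λ ≤ 4 * n := by
    have h1 := DD_le A f0
    rw [hf0cc, mul_one] at h1
    exact h1
  -- f0 is nonconstant on A
  have hnc : NonconstOn A f0 := by
    by_contra hcon
    rw [NonconstOn] at hcon
    push_neg at hcon
    obtain ⟨x0, hx0⟩ := Finset.card_pos.mp (by omega : 0 < A.card)
    have hconst : ∀ y ∈ A, f0 y = f0 x0 := fun y hy => hcon y hy x0 hx0
    have hsum : (∑ x ∈ A, f0 x) = (A.card : ℝ) * f0 x0 := by
      rw [Finset.sum_congr rfl hconst, Finset.sum_const, nsmul_eq_mul]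
    rw [hf0sum] at hsum
    have hx00 : f0 x0 = 0 := by
      rcases mul_eq_zero.mp hsum.symm with h | h
      · exact absurd h hNne
      · exact h
    have : CC A f0 f0 = 0 := by
      refine Finset.sum_eq_zero fun x hx => ?_
      rw [hconst x hx, hx00, mul_zero]
    rw [hf0cc] at this
    norm_num at this
  -- the FKG ratio is at least Λ/(4n) - 1
  have hδ : Λ / (4 * n) - 1 ≤ fkgRatio A := by
    rw [fkgRatio]
    have hle0 : Λ / (4 * n) - 1 ≤ 0 := by
      rw [sub_nonpos, div_le_one (by linarith)]
      exact hΛ4n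
    refine le_min hle0 ?_
    set S := {r : ℝ | ∃ f g : (Fin n → Bool) → ℝ, MonoIncrOn A f ∧ MonoIncrOn A g ∧
      NonconstOn A f ∧ NonconstOn A g ∧ r = covA A f g / Real.sqrt (varA A f * varA A g)} with hS
    by_cases hSne : S.Nonempty
    · refine le_csInf hSne ?_
      rintro r ⟨g, h, hg, hh, hgnc, hhnc, rfl⟩
      exact cov_bound A hN hn ⟨hf0supp, hf0sum, hf0cc⟩ hmin hg hh
        (varA_pos A hN hgnc) (varA_pos A hN hhnc)
    · rw [Set.not_nonempty_iff_eq_empty] at hSne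
      rw [hSne, Real.sInf_empty]
      exact hle0
  -- compute varA f0 and dirA f0
  have hexp : expA A f0 = 0 := by rw [expA, hf0sum, zero_div]
  have hvar : varA A f0 = 1 / (A.card : ℝ) := by
    rw [varA_eq A f0, hexp]
    have : CC A (fun x => f0 x - 0) (fun x => f0 x - 0) = CC A f0 f0 :=
      Finset.sum_congr rfl fun x _ => by ring
    rw [this, hf0cc]
  have hdir : dirA A f0 = Λ / (4 * (A.card : ℝ)) := dirA_eq A f0
  refine ⟨f0, hnc, ?_⟩
  rw [ge_iff_le, hdir, hvar]
  have h1δ : Λ / (4 * n) ≤ 1 + fkgRatio A := by linarith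
  have hstep : Λ ≤ (1 + fkgRatio A) * (4 * n) := by
    have := mul_le_mul_of_nonneg_right h1δ (by linarith : (0:ℝ) ≤ 4 * n)
    rwa [div_mul_cancel₀ _ (by linarith : (4:ℝ) * n ≠ 0)] at this
  rw [div_le_iff₀ (by linarith : (0:ℝ) < 4 * (A.card : ℝ))]
  have : (1 + fkgRatio A) * (n:ℝ) * (1 / (A.card:ℝ)) * (4 * (A.card:ℝ))
      = (1 + fkgRatio A) * (4 * n) := by
    field_simp
  rw [this]
  exact hstep
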